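/- Let Γ be a finitely generated nilpotent group with polynomial growth of degree d(Γ) satisfying 1 ≤ d(Γ) ≤ 3 (equivalently, by the Bass–Guivarc'h formula, the lower central series ranks satisfy d(Γ) = Σ(ℓ+1)·r_ℓ ≤ 3). Then Γ contains a free abelian subgroup of finite index and rank d(Γ). -/

import Mathlib

instance lcsQuotNormal {Γ : Type*} [Group Γ] (H K : Subgroup Γ) [hH : H.Normal] :
    (H.subgroupOf K).Normal := hH.subgroupOf K


open Subgroup Function
open scoped commutatorElement IsMulCommutative

section Helpers

variable {G : Type*} [Group G]

lemma comm_central_mul_left {c : G} (h : ∀ g : G, Commute c g) (v w : G) :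
    ⁅c * v, w⁆ = ⁅v, w⁆ := by
  simp only [commutatorElement_def]
  rw [mul_inv_rev]
  have e1 : c * v * w * (v⁻¹ * c⁻¹) * w⁻¹ = c * (v * w * v⁻¹) * (c⁻¹ * w⁻¹) := by group
  rw [e1, ((h w⁻¹).inv_left).eq]
  have e2 : c * (v * w * v⁻¹) * (w⁻¹ * c⁻¹) = c * (v * w * v⁻¹ * w⁻¹) * c⁻¹ := by group
  rw [e2, (h _).eq, mul_inv_cancel_right]

lemma comm_mul_right_central {a b c : G} (h : ∀ g : G, Commute ⁅a, c⁆ g) :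
    ⁅a, b * c⁆ = ⁅a, b⁆ * ⁅a, c⁆ := by
  have h1 : ⁅a, b * c⁆ = ⁅a, b⁆ * (b * ⁅a, c⁆ * b⁻¹) := by
    simp only [commutatorElement_def]; group
  rw [h1, (h b).symm.eq, mul_inv_cancel_right]

lemma comm_pow_central {a b : G} (h : ∀ g : G, Commute ⁅a, b⁆ g) :
    ∀ n : ℕ, ⁅a ^ n, b⁆ = ⁅a, b⁆ ^ n := by
  intro n
  induction n with
  | zero => simp
  | succ n ih =>
    have h1 : ⁅a ^ (n + 1), b⁆ = a * ⁅a ^ n, b⁆ * a⁻¹ * ⁅a, b⁆ := by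
      rw [pow_succ']
      simp only [commutatorElement_def]; group
    have h2 : ∀ g : G, Commute (⁅a, b⁆ ^ n) g := fun g => (h g).pow_left n
    rw [h1, ih, (h2 a).symm.eq,
      mul_inv_cancel_right, ← pow_succ]

lemma comm_inv_central {a b : G} (h : ∀ g : G, Commute ⁅a, b⁆ g) :
    ⁅a⁻¹, b⁆ = ⁅a, b⁆⁻¹ := by
  have h1 : a * ⁅a⁻¹, b⁆ * a⁻¹ * ⁅a, b⁆ = ⁅a * a⁻¹, b⁆ := by
    simp only [commutatorElement_def]; group
  simp only [mul_inv_cancel] at h1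
  have h2 : ⁅(1 : G), b⁆ = 1 := by simp [commutatorElement_def]
  rw [h2] at h1
  have h3 : a * ⁅a⁻¹, b⁆ * a⁻¹ = ⁅a, b⁆⁻¹ := by
    rw [← mul_eq_one_iff_eq_inv]; exact h1
  have h4 : ⁅a⁻¹, b⁆ = a⁻¹ * ⁅a, b⁆⁻¹ * a := by
    rw [← h3]; group
  rw [h4, mul_assoc, ((h a).inv_left).eq, ← mul_assoc, inv_mul_cancel, one_mul]

lemma comm_zpow_central {a b : G} (h : ∀ g : G, Commute ⁅a, b⁆ g) :
    ∀ m : ℤ, ⁅a ^ m, b⁆ = ⁅a, b⁆ ^ m := by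
  intro m
  induction m using Int.induction_on with
  | zero => simp
  | succ n _ =>
    rw [show ((n : ℤ) + 1) = ((n + 1 : ℕ) : ℤ) by push_cast; ring, zpow_natCast,
      zpow_natCast, comm_pow_central h]
  | pred n _ =>
    rw [show (-(n : ℤ) - 1) = -((n + 1 : ℕ) : ℤ) by push_cast; ring, zpow_neg, zpow_natCast,
      zpow_neg, zpow_natCast]
    have hc : ∀ g : G, Commute ⁅a ^ (n + 1), b⁆ g := by
      rw [comm_pow_central h]; exact fun g => (h g).pow_left _
    rw [comm_inv_central hc, comm_pow_central h]

lemma lcs_succ_eq (n : ℕ) :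
    (⊤ : Subgroup G).lowerCentralSeries (n + 1) = ⁅(⊤ : Subgroup G).lowerCentralSeries n, (⊤ : Subgroup G)⁆ := rfl

lemma closure_torsion_mod (N : Subgroup G) [N.Normal] (S : Set G)
    (h1 : ∀ s ∈ S, ∃ m, 0 < m ∧ s ^ m ∈ N)
    (hcen : ∀ x ∈ closure S, ∀ g : G, ⁅x, g⁆ ∈ N) :
    ∀ x ∈ closure S, ∃ m, 0 < m ∧ x ^ m ∈ N := by
  have hmem : ∀ z : G, QuotientGroup.mk' N z = 1 ↔ z ∈ N := fun z => by
    rw [← MonoidHom.mem_ker, QuotientGroup.ker_mk']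
  intro x hx
  induction hx using closure_induction with
  | mem s hs => exact h1 s hs
  | one => exact ⟨1, one_pos, by simpa using N.one_mem⟩
  | mul x y hx hy ihx ihy =>
    obtain ⟨a, ha, hxa⟩ := ihx
    obtain ⟨b, hb, hyb⟩ := ihy
    refine ⟨a * b, Nat.mul_pos ha hb, ?_⟩
    set π := QuotientGroup.mk' N with hπ
    have hcomm : Commute (π x) (π y) := by
      rw [← commutatorElement_eq_one_iff_commute, ← map_commutatorElement, hmem]
      exact hcen x hx y
    rw [← hmem, map_pow, map_mul, hcomm.mul_pow]
    have e1 : (π x) ^ (a * b) = 1 := by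
      rw [pow_mul, ← map_pow, (hmem _).mpr hxa, one_pow]
    have e2 : (π y) ^ (a * b) = 1 := by
      rw [mul_comm a b, pow_mul, ← map_pow, (hmem _).mpr hyb, one_pow]
    rw [e1, e2, one_mul]
  | inv x hx ihx =>
    obtain ⟨a, ha, hxa⟩ := ihx
    exact ⟨a, ha, by rw [inv_pow]; exact N.inv_mem hxa⟩

lemma lcs_map_surj {H : Type*} [Group H] (f : G →* H) (hf : Surjective f) (n : ℕ) :
    Subgroup.map f ((⊤ : Subgroup G).lowerCentralSeries n) = (⊤ : Subgroup H).lowerCentralSeries n := by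
  induction n with
  | zero =>
    simp only [Subgroup.lowerCentralSeries_zero]
    rw [← MonoidHom.range_eq_map, f.range_eq_top_of_surjective hf]
  | succ n ih =>
    rw [lcs_succ_eq, lcs_succ_eq, Subgroup.map_commutator, ih,
      ← MonoidHom.range_eq_map, f.range_eq_top_of_surjective hf]

lemma central_quot (j : ℕ) (z : G) (hz : z ∈ (⊤ : Subgroup G).lowerCentralSeries (j + 1))
    (w : G ⧸ (⊤ : Subgroup G).lowerCentralSeries (j + 2)) :
    Commute ((QuotientGroup.mk' ((⊤ : Subgroup G).lowerCentralSeries (j + 2))) z) w := by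
  obtain ⟨g, rfl⟩ := QuotientGroup.mk'_surjective _ w
  rw [← commutatorElement_eq_one_iff_commute, ← map_commutatorElement,
    ← MonoidHom.mem_ker, QuotientGroup.ker_mk']
  rw [lcs_succ_eq (j + 1)]
  exact commutator_mem_commutator hz (mem_top g)

end Helpers

universe u

lemma virtAb : ∀ (c : ℕ) (G : Type u) [Group G], Group.FG G → (⊤ : Subgroup G).lowerCentralSeries c = ⊥ →
    (∀ x ∈ commutator G, ∃ n, 0 < n ∧ x ^ n = 1) →
    ∃ A : Subgroup G, A.FiniteIndex ∧ ∀ x ∈ A, ∀ y ∈ A, Commute x y := by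
  intro c
  induction c with
  | zero =>
    intro G _ hfg hbot htor
    have h1 : ∀ x : G, x = 1 := by
      intro x
      have hx : x ∈ (⊤ : Subgroup G).lowerCentralSeries 0 := by rw [Subgroup.lowerCentralSeries_zero]; exact mem_top x
      rw [hbot] at hx
      exact Subgroup.mem_bot.mp hx
    exact ⟨⊤, inferInstance, fun x _ y _ => by rw [h1 x]; exact Commute.one_left y⟩
  | succ c ih =>
    intro G _ hfg hbot htor
    rcases Nat.eq_zero_or_pos c with hc0 | hcpos
    · subst hc0
      refine ⟨⊤, inferInstance, fun x _ y _ => ?_⟩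
      rw [← commutatorElement_eq_one_iff_commute, ← Subgroup.mem_bot, ← hbot,
        Subgroup.top_lowerCentralSeries_one, _root_.commutator_def]
      exact commutator_mem_commutator (mem_top x) (mem_top y)
    · set N := (⊤ : Subgroup G).lowerCentralSeries c with hN
      have hNle : N ≤ commutator G := by
        rw [← Subgroup.top_lowerCentralSeries_one]; exact Subgroup.lowerCentralSeries_antitone _ hcpos
      have hNcen : N ≤ Subgroup.center G := by
        intro z hz
        rw [Subgroup.mem_center_iff]
        intro g
        have hm : ⁅z, g⁆ ∈ (⊤ : Subgroup G).lowerCentralSeries (c + 1) := by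
          rw [lcs_succ_eq]; exact commutator_mem_commutator hz (mem_top g)
        rw [hbot] at hm
        exact ((commutatorElement_eq_one_iff_commute.mp (Subgroup.mem_bot.mp hm)).symm).eq
      set φ := QuotientGroup.mk' N with hφdef
      have hφ : Surjective φ := QuotientGroup.mk'_surjective N
      haveI := hfg
      have hfgQ : Group.FG (G ⧸ N) := Group.fg_of_surjective hφ
      have hbotQ : (⊤ : Subgroup (G ⧸ N)).lowerCentralSeries c = ⊥ := by
        rw [← lcs_map_surj φ hφ c, Subgroup.map_eq_bot_iff, QuotientGroup.ker_mk']
      have htorQ : ∀ x ∈ commutator (G ⧸ N), ∃ n, 0 < n ∧ x ^ n = 1 := by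
        intro x hx
        have he : commutator (G ⧸ N) = Subgroup.map φ (commutator G) := by
          rw [← Subgroup.top_lowerCentralSeries_one, ← Subgroup.top_lowerCentralSeries_one, lcs_map_surj φ hφ 1]
        rw [he] at hx
        obtain ⟨z, hz, rfl⟩ := hx
        obtain ⟨n, hn, hzn⟩ := htor z hz
        exact ⟨n, hn, by rw [← map_pow, hzn, map_one]⟩
      obtain ⟨B, hBfi, hBcomm⟩ := ih (G ⧸ N) hfgQ hbotQ htorQ
      set Δ := B.comap φ with hΔ
      haveI hΔfi : Δ.FiniteIndex := ⟨by
        rw [Subgroup.index_comap_of_surjective _ hφ]; exact hBfi.index_ne_zero⟩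
      haveI : Group.FG ↥Δ := Δ.fg_of_index_ne_zero
      have hΔN : ∀ x y : ↥Δ, ⁅(x : G), (y : G)⁆ ∈ N := by
        intro x y
        have hc : φ ⁅(x : G), (y : G)⁆ = 1 := by
          rw [map_commutatorElement]
          exact commutatorElement_eq_one_iff_commute.mpr (hBcomm _ x.2 _ y.2)
        rwa [← MonoidHom.mem_ker, QuotientGroup.ker_mk'] at hc
      have hmemN : ∀ x y : ↥Δ, ⁅(x : G), (y : G)⁆ ∈ Subgroup.center G :=
        fun x y => hNcen (hΔN x y)
      let f : ↥Δ → (↥Δ →* ↥(Subgroup.center G)) := fun δ => MonoidHom.mk'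
        (fun x => ⟨⁅(δ : G), (x : G)⁆, hmemN δ x⟩)
        (by
          intro x y
          apply Subtype.ext
          show ⁅(δ : G), (x : G) * (y : G)⁆ = ⁅(δ : G), (x : G)⁆ * ⁅(δ : G), (y : G)⁆
          refine comm_mul_right_central (fun g => ?_)
          exact (Subgroup.mem_center_iff.mp (hmemN δ y) g).symm)
      have hker : ∀ δ : ↥Δ, (f δ).ker.FiniteIndex := by
        intro δ
        have hfgr : Group.FG ↥(f δ).range := Group.fg_of_surjective (f δ).rangeRestrict_surjective
        have htors : Monoid.IsTorsion ↥(f δ).range := by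
          rintro ⟨⟨g, hgc⟩, hgr⟩
          obtain ⟨x, hx⟩ := hgr
          have hval : ⁅(δ : G), (x : G)⁆ = g := congrArg Subtype.val hx
          have hgcomm : g ∈ commutator G := by
            rw [_root_.commutator_def]
            exact hval ▸ commutator_mem_commutator (mem_top _) (mem_top _)
          obtain ⟨n, hn, h1⟩ := htor g hgcomm
          rw [isOfFinOrder_iff_pow_eq_one]
          refine ⟨n, hn, ?_⟩
          apply Subtype.ext; apply Subtype.ext
          show g ^ n = 1
          exact h1
        have hfin : Finite ↥(f δ).range := CommGroup.finite_of_fg_torsion _ htors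
        exact ⟨by
          rw [Subgroup.index_ker]
          exact Nat.card_ne_zero.mpr ⟨⟨⟨1, (f δ).range.one_mem⟩⟩, hfin⟩⟩
      obtain ⟨S, hScl, hSfin⟩ := Group.fg_iff.mp ‹Group.FG ↥Δ›
      set C : Subgroup ↥Δ := ⨅ δ ∈ hSfin.toFinset, (f δ).ker with hC
      haveI hCfi : C.FiniteIndex := Subgroup.finiteIndex_iInf' _ (fun δ _ => hker δ)
      set A := C.map Δ.subtype with hA
      have hALE : A ≤ Δ := map_subtype_le C
      have hAidx : A.FiniteIndex := by
        have h1 : A.relIndex Δ * Δ.index = A.index := Subgroup.relIndex_mul_index hALE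
        have h2 : A.subgroupOf Δ = C :=
          Subgroup.comap_map_eq_self_of_injective Δ.subtype_injective C
        have h3 : A.relIndex Δ = C.index := by rw [Subgroup.relIndex, h2]
        exact ⟨by
          rw [← h1, h3]
          exact Nat.mul_ne_zero hCfi.index_ne_zero hΔfi.index_ne_zero⟩
      refine ⟨A, hAidx, ?_⟩
      rintro x ⟨x', hx', rfl⟩ y ⟨y', hy', rfl⟩
      have hcd : ∀ δ ∈ S, Commute x' δ := by
        intro δ hδ
        have hk : x' ∈ (f δ).ker := by
          have h5 : x' ∈ C := hx'
          rw [hC] at h5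
          simp only [Subgroup.mem_iInf] at h5
          exact h5 δ (hSfin.mem_toFinset.mpr hδ)
        have h2 : ⁅(δ : G), (x' : G)⁆ = 1 :=
          congrArg Subtype.val (show (f δ) x' = 1 from hk)
        have h3 : Commute (δ : G) (x' : G) := commutatorElement_eq_one_iff_commute.mp h2
        exact Subtype.ext h3.symm.eq
      clear hy'
      have hy'' : y' ∈ Subgroup.closure S := by rw [hScl]; exact mem_top y'
      have hyx : Commute x' y' := by
        induction hy'' using closure_induction with
        | mem s hs => exact hcd s hs
        | one => exact Commute.one_right x'
        | mul u v hu hv ihu ihv => exact Commute.mul_right ihu ihv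
        | inv u hu ihu => exact Commute.inv_right ihu
      exact congrArg Subtype.val hyx

lemma q0_comm {G : Type*} [Group G]
    (a b : ((⊤ : Subgroup G).lowerCentralSeries 0) ⧸ (((⊤ : Subgroup G).lowerCentralSeries 1).subgroupOf ((⊤ : Subgroup G).lowerCentralSeries 0))) :
    a * b = b * a := by
  induction a using QuotientGroup.induction_on with | H u =>
  induction b using QuotientGroup.induction_on with | H v =>
  rw [← QuotientGroup.mk_mul, ← QuotientGroup.mk_mul, QuotientGroup.eq, Subgroup.mem_subgroupOf]
  have he : (((u * v)⁻¹ * (v * u) : ↥((⊤ : Subgroup G).lowerCentralSeries 0)) : G)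
      = ⁅((v : G))⁻¹, ((u : G))⁻¹⁆ := by
    push_cast
    simp only [commutatorElement_def]
    group
  rw [he, Subgroup.top_lowerCentralSeries_one, _root_.commutator_def]
  exact commutator_mem_commutator (mem_top _) (mem_top _)

/-- Let `Γ` be a finitely generated nilpotent group, `r ℓ` the torsion-free rank
of `Γ_ℓ/Γ_{ℓ+1}` in the lower central series (characterized by embeddings of free
abelian groups), and `d = Σ_{ℓ} (ℓ+1)·r ℓ` the Bass–Guivarc'h polynomial growth
degree.  If `1 ≤ d ≤ 3`, then `Γ` contains a free abelian subgroup of finite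
index and rank `d`. -/
theorem stmt7 {Γ : Type*} [Group Γ] (hfg : Group.FG Γ) (hnil : Group.IsNilpotent Γ)
    (r : ℕ → ℕ)
    (hr : ∀ ℓ k : ℕ, k ≤ r ℓ ↔
      ∃ f : Multiplicative (Fin k → ℤ) →*
        (((⊤ : Subgroup Γ).lowerCentralSeries ℓ) ⧸
          (((⊤ : Subgroup Γ).lowerCentralSeries (ℓ + 1)).subgroupOf ((⊤ : Subgroup Γ).lowerCentralSeries ℓ))),
        Function.Injective f)
    (d k : ℕ) (hk : ∀ ℓ ≥ k, r ℓ = 0)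
    (hd : d = ∑ ℓ ∈ Finset.range k, (ℓ + 1) * r ℓ)
    (hd1 : 1 ≤ d) (hd3 : d ≤ 3) :
    ∃ H : Subgroup Γ, H.FiniteIndex ∧ Nonempty (H ≃* Multiplicative (Fin d → ℤ)) := by
  classical
  -- r ℓ = 0 if the quotient is torsion
  have hRzero : ∀ ℓ : ℕ,
      (∀ x ∈ (⊤ : Subgroup Γ).lowerCentralSeries ℓ, ∃ n, 0 < n ∧ x ^ n ∈ (⊤ : Subgroup Γ).lowerCentralSeries (ℓ + 1)) →
      r ℓ = 0 := by
    intro ℓ hT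
    by_contra h0
    obtain ⟨f, hf⟩ := (hr ℓ 1).mp (Nat.one_le_iff_ne_zero.mpr h0)
    set ξ := f (Multiplicative.ofAdd (fun _ => (1 : ℤ))) with hξ
    obtain ⟨q, hq⟩ := QuotientGroup.mk'_surjective _ ξ
    obtain ⟨n, hn, hqn⟩ := hT (q : Γ) q.2
    have hξn : ξ ^ n = 1 := by
      rw [← hq, ← map_pow, ← MonoidHom.mem_ker, QuotientGroup.ker_mk', Subgroup.mem_subgroupOf]
      exact hqn
    have h1 : (Multiplicative.ofAdd (fun _ => (1 : ℤ)) : Multiplicative (Fin 1 → ℤ)) ^ n = 1 := by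
      apply hf
      rw [map_pow, ← hξ, hξn, map_one]
    have h3 : n • (fun _ => (1 : ℤ)) = (0 : Fin 1 → ℤ) := by
      simpa using congrArg Multiplicative.toAdd h1
    have h4 := congrFun h3 0
    rw [Pi.smul_apply, nsmul_eq_mul, mul_one, Pi.zero_apply] at h4
    have : n = 0 := by exact_mod_cast h4
    omega
  -- torsion if r ℓ = 0
  have hTofR : ∀ ℓ : ℕ, r ℓ = 0 →
      ∀ x ∈ (⊤ : Subgroup Γ).lowerCentralSeries ℓ, ∃ n, 0 < n ∧ x ^ n ∈ (⊤ : Subgroup Γ).lowerCentralSeries (ℓ + 1) := by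
    intro ℓ h0 x hx
    by_contra hcon
    push_neg at hcon
    set ξ := (QuotientGroup.mk' (((⊤ : Subgroup Γ).lowerCentralSeries (ℓ + 1)).subgroupOf ((⊤ : Subgroup Γ).lowerCentralSeries ℓ)))
      (⟨x, hx⟩ : ↥((⊤ : Subgroup Γ).lowerCentralSeries ℓ)) with hξ
    have hord : ¬ IsOfFinOrder ξ := by
      rw [isOfFinOrder_iff_pow_eq_one]
      rintro ⟨n, hn, hξn⟩
      refine hcon n hn ?_
      rw [hξ, ← map_pow, ← MonoidHom.mem_ker, QuotientGroup.ker_mk',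
        Subgroup.mem_subgroupOf] at hξn
      exact hξn
    have hinj : Function.Injective (fun m : ℤ => ξ ^ m) :=
      injective_zpow_iff_not_isOfFinOrder.mpr hord
    have hle : 1 ≤ r ℓ := by
      refine (hr ℓ 1).mpr ⟨MonoidHom.mk' (fun v => ξ ^ (Multiplicative.toAdd v 0)) ?_, ?_⟩
      · intro a b
        show ξ ^ (Multiplicative.toAdd (a * b) 0) = _
        rw [toAdd_mul, Pi.add_apply, zpow_add]
      · intro a b hab
        have h00 : Multiplicative.toAdd a 0 = Multiplicative.toAdd b 0 := hinj hab
        apply Multiplicative.toAdd.injective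
        funext i
        rw [Subsingleton.elim i 0]
        exact h00
    omega
  -- the torsion step lemma
  have hTstep : ∀ ℓ : ℕ,
      (∀ x ∈ (⊤ : Subgroup Γ).lowerCentralSeries ℓ, ∃ n, 0 < n ∧ x ^ n ∈ (⊤ : Subgroup Γ).lowerCentralSeries (ℓ + 1)) →
      (∀ x ∈ (⊤ : Subgroup Γ).lowerCentralSeries (ℓ + 1), ∃ n, 0 < n ∧ x ^ n ∈ (⊤ : Subgroup Γ).lowerCentralSeries (ℓ + 2)) := by
    intro ℓ hT
    have hcl : (⊤ : Subgroup Γ).lowerCentralSeries (ℓ + 1) =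
        Subgroup.closure {g : Γ | ∃ g₁ ∈ (⊤ : Subgroup Γ).lowerCentralSeries ℓ, ∃ g₂ ∈ (⊤ : Subgroup Γ),
          ⁅g₁, g₂⁆ = g} := by
      rw [lcs_succ_eq, Subgroup.commutator_def]
    intro x hx
    rw [hcl] at hx
    refine closure_torsion_mod _ _ ?_ ?_ x hx
    · rintro s ⟨a, ha, b, -, rfl⟩
      obtain ⟨m, hm, ham⟩ := hT a ha
      refine ⟨m, hm, ?_⟩
      rw [← QuotientGroup.ker_mk' ((⊤ : Subgroup Γ).lowerCentralSeries (ℓ + 2)), MonoidHom.mem_ker,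
        map_pow, map_commutatorElement]
      have hc2 : ∀ g, Commute ⁅(QuotientGroup.mk' ((⊤ : Subgroup Γ).lowerCentralSeries (ℓ + 2))) a,
          (QuotientGroup.mk' ((⊤ : Subgroup Γ).lowerCentralSeries (ℓ + 2))) b⁆ g := by
        intro g
        rw [← map_commutatorElement]
        exact central_quot ℓ ⁅a, b⁆
          (by rw [lcs_succ_eq]; exact commutator_mem_commutator ha (mem_top b)) g
      rw [← comm_pow_central hc2 m, ← map_pow]
      exact commutatorElement_eq_one_iff_commute.mpr (central_quot ℓ (a ^ m) ham _)
    · intro z hz g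
      rw [← hcl] at hz
      show ⁅z, g⁆ ∈ (⊤ : Subgroup Γ).lowerCentralSeries (ℓ + 2)
      rw [lcs_succ_eq]
      exact commutator_mem_commutator hz (mem_top g)
  -- Tor 1
  have hTor1 : ∀ x ∈ (⊤ : Subgroup Γ).lowerCentralSeries 1, ∃ n, 0 < n ∧ x ^ n ∈ (⊤ : Subgroup Γ).lowerCentralSeries 2 := by
    by_cases h2r : 2 ≤ r 0
    · -- then r 1 = 0 by the degree bound
      have hr1 : r 1 = 0 := by
        rcases le_or_gt k 1 with hk1 | hk2
        · exact hk 1 hk1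
        · have hsub : ({0, 1} : Finset ℕ) ⊆ Finset.range k := by
            intro i hi
            simp only [Finset.mem_insert, Finset.mem_singleton] at hi
            rcases hi with rfl | rfl <;> simp [Finset.mem_range] <;> omega
          have hle : ∑ ℓ ∈ ({0, 1} : Finset ℕ), (ℓ + 1) * r ℓ ≤ d := by
            rw [hd]
            exact Finset.sum_le_sum_of_subset hsub
          rw [Finset.sum_insert (by norm_num), Finset.sum_singleton] at hle
          omega
      exact hTofR 1 hr1
    · -- r 0 ≤ 1 : every commutator is torsion mod lcs 2
      have hB : ∀ x y : Γ, ∃ n, 0 < n ∧ ⁅x, y⁆ ^ n ∈ (⊤ : Subgroup Γ).lowerCentralSeries 2 := by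
        intro x y
        let ι : Γ →* ↥((⊤ : Subgroup Γ).lowerCentralSeries 0) := MonoidHom.mk'
          (fun z => ⟨z, by rw [Subgroup.lowerCentralSeries_zero]; exact mem_top z⟩) (fun a b => rfl)
        let π := (QuotientGroup.mk'
          (((⊤ : Subgroup Γ).lowerCentralSeries (0 + 1)).subgroupOf ((⊤ : Subgroup Γ).lowerCentralSeries 0))).comp ι
        have hπker : ∀ z : Γ, π z = 1 ↔ z ∈ (⊤ : Subgroup Γ).lowerCentralSeries 1 := by
          intro z
          rw [MonoidHom.comp_apply, ← MonoidHom.mem_ker, QuotientGroup.ker_mk',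
            Subgroup.mem_subgroupOf]
          exact Iff.rfl
        have hcommXY : Commute (π x) (π y) := q0_comm (π x) (π y)
        let F : Multiplicative (Fin 2 → ℤ) →* _ := MonoidHom.mk'
          (fun v => (π x) ^ (Multiplicative.toAdd v 0) * (π y) ^ (Multiplicative.toAdd v 1))
          (by
            intro a b
            show (π x) ^ (Multiplicative.toAdd (a * b) 0) * (π y) ^ (Multiplicative.toAdd (a * b) 1) = _
            rw [toAdd_mul, Pi.add_apply, Pi.add_apply, zpow_add, zpow_add,
              mul_assoc, mul_assoc]
            congr 1
            rw [← mul_assoc, (hcommXY.zpow_zpow _ _).eq, mul_assoc])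
        have hFni : ¬ Function.Injective F := fun hFinj => h2r ((hr 0 2).mpr ⟨F, hFinj⟩)
        have hkerel : ∃ u : Multiplicative (Fin 2 → ℤ), u ≠ 1 ∧ F u = 1 := by
          rw [Function.Injective] at hFni
          push_neg at hFni
          obtain ⟨a, b, hab, hne⟩ := hFni
          refine ⟨a * b⁻¹, fun h => hne (by rwa [mul_inv_eq_one] at h), ?_⟩
          rw [map_mul, map_inv, hab, mul_inv_cancel]
        obtain ⟨u, hu1, hFu⟩ := hkerel
        set u0 := Multiplicative.toAdd u 0 with hu0def
        set u1 := Multiplicative.toAdd u 1 with hu1def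
        have hγmem : x ^ u0 * y ^ u1 ∈ (⊤ : Subgroup Γ).lowerCentralSeries 1 := by
          rw [← hπker, map_mul, map_zpow, map_zpow]
          exact hFu
        let ρ := QuotientGroup.mk' ((⊤ : Subgroup Γ).lowerCentralSeries 2)
        have hρ1 : ∀ z : Γ, z ∈ (⊤ : Subgroup Γ).lowerCentralSeries 1 →
            ∀ w : Γ ⧸ (⊤ : Subgroup Γ).lowerCentralSeries 2, Commute (ρ z) w :=
          fun z hz w => central_quot 0 z hz w
        have hmemc : ∀ a b : Γ, ⁅a, b⁆ ∈ (⊤ : Subgroup Γ).lowerCentralSeries 1 := by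
          intro a b
          rw [Subgroup.top_lowerCentralSeries_one, _root_.commutator_def]
          exact commutator_mem_commutator (mem_top a) (mem_top b)
        by_cases hu0z : u0 = 0
        · have hu1ne : u1 ≠ 0 := by
            intro h1
            apply hu1
            apply Multiplicative.toAdd.injective
            funext i
            have hall : ∀ i : Fin 2, Multiplicative.toAdd u i = 0 :=
              Fin.forall_fin_two.mpr ⟨hu0z, h1⟩
            exact hall i
          have hymem : y ^ u1 ∈ (⊤ : Subgroup Γ).lowerCentralSeries 1 := by
            rw [hu0z] at hγmem
            simpa using hγmem
          have hccen' : ∀ g, Commute ⁅ρ y, ρ x⁆ g := by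
            intro g
            rw [← map_commutatorElement]
            exact hρ1 ⁅y, x⁆ (hmemc y x) g
          have h1 : ⁅ρ y, ρ x⁆ ^ u1 = 1 := by
            rw [← comm_zpow_central hccen' u1, ← map_zpow]
            exact commutatorElement_eq_one_iff_commute.mpr (hρ1 (y ^ u1) hymem (ρ x))
          have h3 : ρ (⁅x, y⁆ ^ u1) = 1 := by
            rw [map_zpow, map_commutatorElement, ← commutatorElement_inv, inv_zpow, h1, inv_one]
          have h4 : ⁅x, y⁆ ^ u1 ∈ (⊤ : Subgroup Γ).lowerCentralSeries 2 := by
            have h5 := MonoidHom.mem_ker.mpr h3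
            rwa [QuotientGroup.ker_mk'] at h5
          refine ⟨u1.natAbs, Int.natAbs_pos.mpr hu1ne, ?_⟩
          rcases Int.natAbs_eq u1 with he | he
          · rw [← zpow_natCast, ← he]; exact h4
          · rw [← zpow_natCast, show ((u1.natAbs : ℤ)) = -u1 from by omega, zpow_neg]
            exact ((⊤ : Subgroup Γ).lowerCentralSeries 2).inv_mem h4
        · have hccen : ∀ g, Commute ⁅ρ x, ρ y⁆ g := by
            intro g
            rw [← map_commutatorElement]
            exact hρ1 ⁅x, y⁆ (hmemc x y) g
          have h1 : ⁅ρ x, ρ y⁆ ^ u0 = 1 := by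
            rw [← comm_zpow_central hccen u0, ← map_zpow]
            rw [show ρ (x ^ u0) = ρ (x ^ u0 * y ^ u1) * ρ ((y ^ u1)⁻¹) from by
              rw [← map_mul]; congr 1; group]
            rw [comm_central_mul_left (hρ1 _ hγmem)]
            rw [map_inv, map_zpow]
            exact commutatorElement_eq_one_iff_commute.mpr
              (((Commute.refl (ρ y)).zpow_left u1).inv_left)
          have h3 : ρ (⁅x, y⁆ ^ u0) = 1 := by
            rw [map_zpow, map_commutatorElement]; exact h1
          have h4 : ⁅x, y⁆ ^ u0 ∈ (⊤ : Subgroup Γ).lowerCentralSeries 2 := by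
            have h5 := MonoidHom.mem_ker.mpr h3
            rwa [QuotientGroup.ker_mk'] at h5
          refine ⟨u0.natAbs, Int.natAbs_pos.mpr hu0z, ?_⟩
          rcases Int.natAbs_eq u0 with he | he
          · rw [← zpow_natCast, ← he]; exact h4
          · rw [← zpow_natCast, show ((u0.natAbs : ℤ)) = -u0 from by omega, zpow_neg]
            exact ((⊤ : Subgroup Γ).lowerCentralSeries 2).inv_mem h4
      have hcl : (⊤ : Subgroup Γ).lowerCentralSeries 1 =
          Subgroup.closure {g : Γ | ∃ g₁ ∈ (⊤ : Subgroup Γ), ∃ g₂ ∈ (⊤ : Subgroup Γ),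
            ⁅g₁, g₂⁆ = g} := by
        rw [show (⊤ : Subgroup Γ).lowerCentralSeries 1 = ⁅(⊤ : Subgroup Γ), (⊤ : Subgroup Γ)⁆ from rfl,
          Subgroup.commutator_def]
      intro x hx
      rw [hcl] at hx
      refine closure_torsion_mod _ _ ?_ ?_ x hx
      · rintro s ⟨a, -, b, -, rfl⟩
        exact hB a b
      · intro z hz g
        rw [← hcl] at hz
        show ⁅z, g⁆ ∈ (⊤ : Subgroup Γ).lowerCentralSeries 2
        rw [show ((⊤ : Subgroup Γ).lowerCentralSeries 2) = ⁅(⊤ : Subgroup Γ).lowerCentralSeries 1, (⊤ : Subgroup Γ)⁆ from rfl]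
        exact commutator_mem_commutator hz (mem_top g)
  -- all higher quotients torsion
  have hTorAll : ∀ j : ℕ, ∀ x ∈ (⊤ : Subgroup Γ).lowerCentralSeries (j + 1),
      ∃ n, 0 < n ∧ x ^ n ∈ (⊤ : Subgroup Γ).lowerCentralSeries (j + 2) := by
    intro j
    induction j with
    | zero => exact hTor1
    | succ j ihj => exact hTstep (j + 1) ihj
  have hrpos : ∀ ℓ : ℕ, 1 ≤ ℓ → r ℓ = 0 := by
    intro ℓ hℓ
    obtain ⟨j, rfl⟩ : ∃ j, ℓ = j + 1 := ⟨ℓ - 1, by omega⟩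
    exact hRzero (j + 1) (hTorAll j)
  have hdr0 : d = r 0 := by
    rcases Nat.eq_zero_or_pos k with hk0 | hkpos
    · subst hk0; simp at hd; omega
    · rw [hd, Finset.sum_eq_single_of_mem 0 (Finset.mem_range.mpr hkpos)
        (fun b _ hb => by rw [hrpos b (by omega)]; ring)]
      ring
  -- torsion of commutator subgroup
  have hcomm_tor : ∀ x ∈ commutator Γ, ∃ n, 0 < n ∧ x ^ n = 1 := by
    obtain ⟨c, hc⟩ := Subgroup.nilpotent_iff_lowerCentralSeries.mp hnil
    have key : ∀ j : ℕ, ∀ x ∈ (⊤ : Subgroup Γ).lowerCentralSeries 1,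
        ∃ n, 0 < n ∧ x ^ n ∈ (⊤ : Subgroup Γ).lowerCentralSeries (j + 1) := by
      intro j
      induction j with
      | zero => exact fun x hx => ⟨1, one_pos, by simpa using hx⟩
      | succ j ihj =>
        intro x hx
        obtain ⟨n, hn, hxn⟩ := ihj x hx
        obtain ⟨m, hm, hxm⟩ := hTorAll j (x ^ n) hxn
        exact ⟨n * m, Nat.mul_pos hn hm, by rw [pow_mul]; exact hxm⟩
    intro x hx
    obtain ⟨n, hn, hxn⟩ := key c x (by rwa [Subgroup.top_lowerCentralSeries_one])
    refine ⟨n, hn, ?_⟩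
    have hle : (⊤ : Subgroup Γ).lowerCentralSeries (c + 1) ≤ ⊥ := by
      rw [← hc]; exact Subgroup.lowerCentralSeries_antitone _ (by omega)
    simpa using hle hxn
  -- virtually abelian
  obtain ⟨c, hc⟩ := Subgroup.nilpotent_iff_lowerCentralSeries.mp hnil
  obtain ⟨A, hAfi, hAcomm⟩ := virtAb c Γ hfg hc hcomm_tor
  haveI := hfg
  haveI := hAfi
  haveI : Group.FG ↥A := A.fg_of_index_ne_zero
  haveI : IsMulCommutative ↥A := ⟨⟨fun a b => Subtype.ext (hAcomm a a.2 b b.2)⟩⟩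
  obtain ⟨n, ι, fι, p, hp, e, ⟨E⟩⟩ := AddCommGroup.equiv_free_prod_directSum_zmod (Additive ↥A)
  haveI : ∀ i : ι, NeZero (p i ^ e i) := fun i => ⟨pow_ne_zero _ (hp i).pos.ne'⟩
  haveI hDfin : Finite (DirectSum ι fun i => ZMod (p i ^ e i)) :=
    Finite.of_equiv _ (DFinsupp.equivFunOnFintype).symm
  haveI : Finite (Multiplicative (DirectSum ι fun i => ZMod (p i ^ e i))) := hDfin
  -- split off the free part
  let ψ : ↥A →* Multiplicative (DirectSum ι fun i => ZMod (p i ^ e i)) := MonoidHom.mk'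
    (fun a => Multiplicative.ofAdd (E (Additive.ofMul a)).2)
    (by
      intro a b
      show Multiplicative.ofAdd (E (Additive.ofMul (a * b))).2 = _
      rw [show Additive.ofMul (a * b) = Additive.ofMul a + Additive.ofMul b from rfl, map_add,
        Prod.snd_add, ofAdd_add])
  let χ : ↥A →* Multiplicative (Fin n →₀ ℤ) := MonoidHom.mk'
    (fun a => Multiplicative.ofAdd (E (Additive.ofMul a)).1)
    (by
      intro a b
      show Multiplicative.ofAdd (E (Additive.ofMul (a * b))).1 = _
      rw [show Additive.ofMul (a * b) = Additive.ofMul a + Additive.ofMul b from rfl, map_add,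
        Prod.fst_add, ofAdd_add])
  set B := ψ.ker with hBdef
  haveI hBfi : B.FiniteIndex := ⟨by
    rw [hBdef, Subgroup.index_ker]
    exact Nat.card_ne_zero.mpr ⟨⟨⟨1, ψ.range.one_mem⟩⟩, inferInstance⟩⟩
  have hχinj : Function.Injective (χ.comp B.subtype) := by
    rw [injective_iff_map_eq_one]
    rintro ⟨a, haB⟩ h1
    have h2 : (E (Additive.ofMul a)).1 = 0 := by
      simpa [χ] using congrArg Multiplicative.toAdd h1
    have h3 : (E (Additive.ofMul a)).2 = 0 := by
      simpa [ψ] using congrArg Multiplicative.toAdd (show ψ a = 1 from haB)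
    have h4 : E (Additive.ofMul a) = 0 := Prod.ext h2 h3
    have h5 : Additive.ofMul a = 0 := by
      apply E.injective; rw [h4, map_zero]
    apply Subtype.ext
    simpa using congrArg Additive.toMul h5
  have hχsurj : ∀ w : Multiplicative (Fin n →₀ ℤ), ∃ b : ↥B, (χ.comp B.subtype) b = w := by
    intro w
    set a : ↥A := Additive.toMul (E.symm (Multiplicative.toAdd w, 0)) with hadef
    have haB : a ∈ B := by
      show ψ a = 1
      show Multiplicative.ofAdd (E (Additive.ofMul a)).2 = 1
      rw [show Additive.ofMul a = E.symm (Multiplicative.toAdd w, 0) from rfl, E.apply_symm_apply]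
      rfl
    refine ⟨⟨a, haB⟩, ?_⟩
    show Multiplicative.ofAdd (E (Additive.ofMul a)).1 = w
    rw [show Additive.ofMul a = E.symm (Multiplicative.toAdd w, 0) from rfl, E.apply_symm_apply]
    rfl
  let θ1 : ↥B ≃* Multiplicative (Fin n →₀ ℤ) :=
    MulEquiv.ofBijective (χ.comp B.subtype) ⟨hχinj, fun w => hχsurj w⟩
  let θ2 : Multiplicative (Fin n →₀ ℤ) ≃* Multiplicative (Fin n → ℤ) :=
    AddEquiv.toMultiplicative Finsupp.addEquivFunOnFinite
  set H : Subgroup Γ := B.map A.subtype with hHdef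
  let θ0 : ↥H ≃* ↥B := (Subgroup.equivMapOfInjective B A.subtype A.subtype_injective).symm
  let θtot : ↥H ≃* Multiplicative (Fin n → ℤ) := (θ0.trans θ1).trans θ2
  have hHle : H ≤ A := map_subtype_le B
  have hHfi : H.FiniteIndex := by
    have h1 : H.relIndex A * A.index = H.index := Subgroup.relIndex_mul_index hHle
    have h2 : H.subgroupOf A = B := Subgroup.comap_map_eq_self_of_injective A.subtype_injective B
    refine ⟨?_⟩
    rw [← h1, Subgroup.relIndex, h2]
    exact Nat.mul_ne_zero hBfi.index_ne_zero hAfi.index_ne_zero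
  -- torsion-freeness of H
  have hHtf : ∀ h : ↥H, ∀ m : ℕ, 0 < m → h ^ m = 1 → h = 1 := by
    intro h m hm h1
    have h2 : (θtot h) ^ m = 1 := by rw [← map_pow, h1, map_one]
    have h3 : m • (Multiplicative.toAdd (θtot h)) = 0 := by
      simpa using congrArg Multiplicative.toAdd h2
    have h4 : Multiplicative.toAdd (θtot h) = 0 := by
      funext i
      have h5 := congrFun h3 i
      rw [Pi.smul_apply, nsmul_eq_mul] at h5
      rcases mul_eq_zero.mp h5 with h6 | h6
      · exact absurd (by exact_mod_cast h6) hm.ne'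
      · exact h6
    have h6 : θtot h = 1 := by
      apply Multiplicative.toAdd.injective
      simpa using h4
    exact θtot.injective (by rw [h6, map_one])
  -- the projection to the abelianized top quotient
  let ι0 : Γ →* ↥((⊤ : Subgroup Γ).lowerCentralSeries 0) := MonoidHom.mk'
    (fun z => ⟨z, by rw [Subgroup.lowerCentralSeries_zero]; exact mem_top z⟩) (fun a b => rfl)
  let π0 := (QuotientGroup.mk'
    (((⊤ : Subgroup Γ).lowerCentralSeries (0 + 1)).subgroupOf ((⊤ : Subgroup Γ).lowerCentralSeries 0))).comp ι0
  have hπ0ker : ∀ z : Γ, π0 z = 1 ↔ z ∈ (⊤ : Subgroup Γ).lowerCentralSeries 1 := by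
    intro z
    rw [MonoidHom.comp_apply, ← MonoidHom.mem_ker, QuotientGroup.ker_mk',
      Subgroup.mem_subgroupOf]
    exact Iff.rfl
  have hπ0surj : Function.Surjective π0 := by
    intro q
    obtain ⟨u, rfl⟩ := QuotientGroup.mk'_surjective _ q
    exact ⟨u, by rw [MonoidHom.comp_apply]; congr 1⟩
  -- n ≤ d
  have hnd : n ≤ r 0 := by
    refine (hr 0 n).mpr ⟨π0.comp (H.subtype.comp (θtot.symm : _ ≃* _).toMonoidHom), ?_⟩
    rw [injective_iff_map_eq_one]
    intro v hv
    have h1 : ((θtot.symm v : ↥H) : Γ) ∈ (⊤ : Subgroup Γ).lowerCentralSeries 1 := (hπ0ker _).mp hv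
    have h2 : ((θtot.symm v : ↥H) : Γ) ∈ commutator Γ := by rwa [← Subgroup.top_lowerCentralSeries_one]
    obtain ⟨m, hm, hm1⟩ := hcomm_tor _ h2
    have h3 : (θtot.symm v : ↥H) = 1 := hHtf _ m hm (Subtype.ext hm1)
    calc v = θtot (θtot.symm v) := (θtot.apply_symm_apply v).symm
    _ = 1 := by rw [h3, map_one]
  -- d ≤ n
  have hdn : r 0 ≤ n := by
    obtain ⟨f, hfinj⟩ := (hr 0 (r 0)).mp le_rfl
    set M := H.map π0 with hMdef
    have hMne : M.index ≠ 0 := by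
      have h1 : H ≤ M.comap π0 := fun z hz => Subgroup.mem_comap.mpr (Subgroup.mem_map_of_mem _ hz)
      have h2 : (M.comap π0).index = M.index := Subgroup.index_comap_of_surjective _ hπ0surj
      have h3 := Subgroup.index_dvd_of_le h1
      rw [h2] at h3
      intro h0; rw [h0] at h3
      exact hHfi.index_ne_zero (Nat.eq_zero_of_zero_dvd h3)
    haveI hMnormal : M.Normal := ⟨by
      intro m hm g
      rw [show g * m * g⁻¹ = m from by rw [q0_comm g m]; exact mul_inv_cancel_right m g]
      exact hm⟩
    set V := f.range with hVdef
    set j := M.relIndex V with hjdef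
    have hjne : j ≠ 0 := by
      intro h0
      apply hMne
      apply Nat.eq_zero_of_zero_dvd
      have hdvd := Subgroup.relIndex_dvd_index_of_normal M V
      rwa [← hjdef, h0] at hdvd
    have hVcomm : ∀ a b : ↥V, a * b = b * a := fun a b => Subtype.ext (q0_comm _ _)
    haveI : (M.subgroupOf V).Normal := ⟨by
      intro x hx g
      rw [show g * x * g⁻¹ = x from by rw [hVcomm g x]; exact mul_inv_cancel_right x g]
      exact hx⟩
    have hpow : ∀ q, ∀ hq : q ∈ V, q ^ j ∈ M := by
      intro q hq
      have h1 := Subgroup.pow_index_mem (M.subgroupOf V) (⟨q, hq⟩ : ↥V)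
      have h2 := Subgroup.mem_subgroupOf.mp h1
      simp only [hjdef, Subgroup.relIndex]; exact h2
    have hmemM : ∀ h : ↥H, π0 (h : Γ) ∈ M := fun h => Subgroup.mem_map_of_mem _ h.2
    let g0 : ↥H →* ↥M := (π0.comp H.subtype).codRestrict M (fun h => hmemM h)
    have hg0inj : Function.Injective g0 := by
      rw [injective_iff_map_eq_one]
      intro h hh
      have h1 : π0 (h : Γ) = 1 := congrArg Subtype.val hh
      have h2 : (h : Γ) ∈ commutator Γ := by
        rw [← Subgroup.top_lowerCentralSeries_one]; exact (hπ0ker _).mp h1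
      obtain ⟨m, hm, hm1⟩ := hcomm_tor _ h2
      exact hHtf h m hm (Subtype.ext hm1)
    have hg0surj : Function.Surjective g0 := by
      rintro ⟨q, hq⟩
      obtain ⟨z, hz, rfl⟩ := hq
      exact ⟨⟨z, hz⟩, rfl⟩
    let e3 : ↥H ≃* ↥M := MulEquiv.ofBijective g0 ⟨hg0inj, hg0surj⟩
    have hVmem : ∀ v, f v ∈ V := fun v => ⟨v, rfl⟩
    let mOf : Multiplicative (Fin (r 0) → ℤ) → ↥M := fun v => ⟨f v ^ j, hpow (f v) (hVmem v)⟩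
    have hmul : ∀ a b, mOf (a * b) = mOf a * mOf b := by
      intro a b
      apply Subtype.ext
      show f (a * b) ^ j = f a ^ j * f b ^ j
      rw [map_mul, (show Commute (f a) (f b) from q0_comm (f a) (f b)).mul_pow]
    let Φ : Multiplicative (Fin (r 0) → ℤ) →* Multiplicative (Fin n → ℤ) := MonoidHom.mk'
      (fun v => θtot (e3.symm (mOf v)))
      (by
        intro a b
        have e4 : θtot (e3.symm (mOf (a * b))) = θtot (e3.symm (mOf a * mOf b)) :=
          congrArg (fun z => θtot (e3.symm z)) (hmul a b)
        exact e4.trans (by rw [map_mul, map_mul]))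
    have hΦinj : Function.Injective Φ := by
      rw [injective_iff_map_eq_one]
      intro v hv
      have h1 : e3.symm (mOf v) = 1 := θtot.injective (by rw [show θtot (e3.symm (mOf v)) = 1 from hv, map_one])
      have h2 : mOf v = 1 := e3.symm.injective (by rw [h1, map_one])
      have h3 : f v ^ j = 1 := congrArg Subtype.val h2
      have h4 : f (v ^ j) = 1 := by rw [map_pow]; exact h3
      have h5 : v ^ j = 1 := hfinj (by rw [h4, map_one])
      apply Multiplicative.toAdd.injective
      have h6 : j • Multiplicative.toAdd v = 0 := by
        simpa using congrArg Multiplicative.toAdd h5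
      funext i
      have h7 := congrFun h6 i
      rw [Pi.smul_apply, nsmul_eq_mul] at h7
      rcases mul_eq_zero.mp h7 with h8 | h8
      · exact absurd (by exact_mod_cast h8) hjne
      · simpa using h8
    let Φ' : (Fin (r 0) → ℤ) →+ (Fin n → ℤ) := AddMonoidHom.mk'
      (fun x => Multiplicative.toAdd (Φ (Multiplicative.ofAdd x)))
      (by
        intro a b
        show Multiplicative.toAdd (Φ (Multiplicative.ofAdd (a + b))) = _
        rw [show Multiplicative.ofAdd (a + b) = Multiplicative.ofAdd a * Multiplicative.ofAdd b
          from rfl, map_mul, toAdd_mul])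
    have hΦ'inj : Function.Injective Φ' :=
      fun a b hab => Multiplicative.ofAdd.injective (hΦinj (Multiplicative.toAdd.injective hab))
    have h1 := LinearMap.finrank_le_finrank_of_injective
      (f := Φ'.toIntLinearMap) hΦ'inj
    rwa [Module.finrank_pi, Module.finrank_pi, Fintype.card_fin, Fintype.card_fin] at h1
  have hnd' : n = d := le_antisymm (hdr0 ▸ hnd) (hdr0 ▸ hdn)
  exact ⟨H, hHfi, ⟨hnd' ▸ θtot⟩⟩
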